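/- For every positive integer n and every k ∈ {1,...,n}, the signed distributions of depth and drp agree on the set of permutations with first letter k: ∑_{π ∈ 𝔖_n, π(1)=k} sign(π) q^{depth(π)} = ∑_{π ∈ 𝔖_n, π(1)=k} sign(π) q^{drp(π)} as polynomials in q over the integers. -/

import Mathlib

open Finset

/-- The one-line notation value of `π` at position `k ∈ {1,…,n}`:
`oneLine π k = π(k)` with `1`-indexed positions and values. -/
def oneLine {n : ℕ} (π : Equiv.Perm (Fin n)) (k : ℕ) : ℕ :=
  if h : k - 1 < n then ((π ⟨k - 1, h⟩ : Fin n) : ℕ) + 1 else k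

/-- `SUC(π) = {i ∈ {1,…,n-1} : π(i+1) = π(i)+1}` (position set). -/
def SUC {n : ℕ} (π : Equiv.Perm (Fin n)) : Finset ℕ :=
  (Finset.Icc 1 (n - 1)).filter (fun i => oneLine π (i + 1) = oneLine π i + 1)

/-- `FIX(π) = {i ∈ {1,…,n-1} : π(i) = i}` (position set). -/
def FIX {n : ℕ} (π : Equiv.Perm (Fin n)) : Finset ℕ :=
  (Finset.Icc 1 (n - 1)).filter (fun i => oneLine π i = i)

/-- `Asc₂(π) = {π(i+1) : i ∈ {1,…,n-1}, π(i+1) ≥ π(i)+2}` (value set). -/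
def Asc2 {n : ℕ} (π : Equiv.Perm (Fin n)) : Finset ℕ :=
  ((Finset.Icc 1 (n - 1)).filter (fun i => oneLine π i + 2 ≤ oneLine π (i + 1))).image
    (fun i => oneLine π (i + 1))

/-- `Des(π) = {π(i+1) : i ∈ {1,…,n-1}, π(i) > π(i+1)}` (value set). -/
def DesSet {n : ℕ} (π : Equiv.Perm (Fin n)) : Finset ℕ :=
  ((Finset.Icc 1 (n - 1)).filter (fun i => oneLine π (i + 1) < oneLine π i)).image
    (fun i => oneLine π (i + 1))

/-- `Suc(π) = {π(i+1) : i ∈ {1,…,n-1}, π(i+1) = π(i)+1}` (value set). -/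
def SucSet {n : ℕ} (π : Equiv.Perm (Fin n)) : Finset ℕ :=
  ((Finset.Icc 1 (n - 1)).filter (fun i => oneLine π (i + 1) = oneLine π i + 1)).image
    (fun i => oneLine π (i + 1))

/-- `Aexc(π) = {π(i) : i ∈ {2,…,n}, π(i) < i}` (value set). -/
def Aexc {n : ℕ} (π : Equiv.Perm (Fin n)) : Finset ℕ :=
  ((Finset.Icc 2 n).filter (fun i => oneLine π i < i)).image (fun i => oneLine π i)

/-- `Êxc(π) = {π(i) : i ∈ {2,…,n}, π(i) > i}` (value set). -/
def ExcHat {n : ℕ} (π : Equiv.Perm (Fin n)) : Finset ℕ :=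
  ((Finset.Icc 2 n).filter (fun i => i < oneLine π i)).image (fun i => oneLine π i)

/-- `F̂ix(π) = {π(i) : i ∈ {2,…,n}, π(i) = i}` (value set). -/
def FixHat {n : ℕ} (π : Equiv.Perm (Fin n)) : Finset ℕ :=
  ((Finset.Icc 2 n).filter (fun i => oneLine π i = i)).image (fun i => oneLine π i)

/-- `depth(π) = ∑_{i : π(i) > i} (π(i) − i)`. -/
def depthStat {n : ℕ} (π : Equiv.Perm (Fin n)) : ℕ :=
  ∑ i ∈ (Finset.Icc 1 n).filter (fun i => i < oneLine π i), (oneLine π i - i)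

/-- `drp(π) = ∑_{i ∈ {1,…,n-1} : π(i) > π(i+1)} (π(i) − π(i+1))`. -/
def drpStat {n : ℕ} (π : Equiv.Perm (Fin n)) : ℕ :=
  ∑ i ∈ (Finset.Icc 1 (n - 1)).filter (fun i => oneLine π (i + 1) < oneLine π i),
    (oneLine π i - oneLine π (i + 1))

/-- `exc(π) = |{i ∈ {1,…,n} : π(i) > i}|`. -/
def excNum {n : ℕ} (π : Equiv.Perm (Fin n)) : ℕ :=
  ((Finset.Icc 1 n).filter (fun i => i < oneLine π i)).card

/-- `nexc(π) = |{i ∈ {1,…,n} : π(i) < i}|`. -/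
def nexcNum {n : ℕ} (π : Equiv.Perm (Fin n)) : ℕ :=
  ((Finset.Icc 1 n).filter (fun i => oneLine π i < i)).card

/-- `des(π) = |{i ∈ {1,…,n-1} : π(i) > π(i+1)}|`. -/
def desNum {n : ℕ} (π : Equiv.Perm (Fin n)) : ℕ :=
  ((Finset.Icc 1 (n - 1)).filter (fun i => oneLine π (i + 1) < oneLine π i)).card

/-- `asc(π) = |{i ∈ {1,…,n-1} : π(i) < π(i+1)}|`. -/
def ascNum {n : ℕ} (π : Equiv.Perm (Fin n)) : ℕ :=
  ((Finset.Icc 1 (n - 1)).filter (fun i => oneLine π i < oneLine π (i + 1))).card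

/-- `inv(π) = |{(i,j) : 1 ≤ i < j ≤ n, π(i) > π(j)}|`. -/
def invNum {n : ℕ} (π : Equiv.Perm (Fin n)) : ℕ :=
  (((Finset.Icc 1 n) ×ˢ (Finset.Icc 1 n)).filter
    (fun p : ℕ × ℕ => p.1 < p.2 ∧ oneLine π p.2 < oneLine π p.1)).card


/-! ### Auxiliary machinery -/

section aux

variable {n m : ℕ}

lemma ol_bounds (π : Equiv.Perm (Fin n)) {t : ℕ} (h1 : 1 ≤ t) (h2 : t ≤ n) :
    1 ≤ oneLine π t ∧ oneLine π t ≤ n := by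
  have ht : t - 1 < n := by omega
  simp only [oneLine, dif_pos ht]
  have := (π ⟨t-1, ht⟩).isLt
  omega

lemma ol_inj (π : Equiv.Perm (Fin n)) {s t : ℕ} (hs1 : 1 ≤ s) (hs2 : s ≤ n)
    (ht1 : 1 ≤ t) (ht2 : t ≤ n) (h : oneLine π s = oneLine π t) : s = t := by
  have hs : s - 1 < n := by omega
  have ht : t - 1 < n := by omega
  simp only [oneLine, dif_pos hs, dif_pos ht] at h
  have h2 : π ⟨s-1, hs⟩ = π ⟨t-1, ht⟩ := Fin.ext (by omega)
  have h3 := π.injective h2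
  have h4 : s - 1 = t - 1 := congrArg Fin.val h3
  omega

lemma ol_surj (π : Equiv.Perm (Fin n)) {x : ℕ} (h1 : 1 ≤ x) (h2 : x ≤ n) :
    ∃ t, 1 ≤ t ∧ t ≤ n ∧ oneLine π t = x := by
  have hx : x - 1 < n := by omega
  refine ⟨(π.symm ⟨x-1, hx⟩).val + 1, by omega,
    by have := (π.symm ⟨x-1, hx⟩).isLt; omega, ?_⟩
  have hlt : (π.symm ⟨x-1, hx⟩).val + 1 - 1 < n := by
    simpa using (π.symm ⟨x-1, hx⟩).isLt
  simp only [oneLine, dif_pos hlt]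
  have : (⟨(π.symm ⟨x-1, hx⟩).val + 1 - 1, hlt⟩ : Fin n) = π.symm ⟨x-1, hx⟩ :=
    Fin.ext (by simp)
  rw [this, Equiv.apply_symm_apply]
  simp
  omega

lemma ol_one {t : ℕ} (h1 : 1 ≤ t) : oneLine (1 : Equiv.Perm (Fin n)) t = t := by
  unfold oneLine
  split_ifs with ht
  · simp only [Equiv.Perm.one_apply]
    omega
  · rfl

/-- positions > m carry values > m, given positions ≤ m are fixed. -/
lemma ol_big (π : Equiv.Perm (Fin n)) {m t : ℕ}
    (hP : ∀ s, 1 ≤ s → s ≤ m → oneLine π s = s)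
    (ht : m + 1 ≤ t) (htn : t ≤ n) : m + 1 ≤ oneLine π t := by
  by_contra hcon
  push_neg at hcon
  have h1 : 1 ≤ oneLine π t := (ol_bounds π (by omega) htn).1
  have h2 : oneLine π t ≤ n := (ol_bounds π (by omega) htn).2
  have h3 := hP (oneLine π t) h1 (by omega)
  have := ol_inj π (by omega : 1 ≤ t) htn h1 h2 h3.symm
  omega

/-- `vswap` : exchange the values `m+1` and `m+2` (in one-line notation). -/
def vswap (n m : ℕ) (hm : m + 1 < n) (π : Equiv.Perm (Fin n)) : Equiv.Perm (Fin n) :=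
  Equiv.swap (⟨m, by omega⟩ : Fin n) ⟨m+1, hm⟩ * π

lemma vswap_vswap (hm : m + 1 < n) (π : Equiv.Perm (Fin n)) :
    vswap n m hm (vswap n m hm π) = π := by
  simp [vswap, ← mul_assoc]

lemma ol_vswap (hm : m + 1 < n) (π : Equiv.Perm (Fin n)) {t : ℕ}
    (h1 : 1 ≤ t) (h2 : t ≤ n) :
    oneLine (vswap n m hm π) t =
      if oneLine π t = m + 1 then m + 2
      else if oneLine π t = m + 2 then m + 1 else oneLine π t := by
  have ht : t - 1 < n := by omega
  simp only [oneLine, dif_pos ht, vswap, Equiv.Perm.mul_apply]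
  set x := π ⟨t-1, ht⟩ with hx
  by_cases hx1 : x = (⟨m, by omega⟩ : Fin n)
  · rw [hx1, Equiv.swap_apply_left]
    have : (x : ℕ) = m := by rw [hx1]
    simp only [this]
    split_ifs <;> omega
  · by_cases hx2 : x = (⟨m+1, hm⟩ : Fin n)
    · rw [hx2, Equiv.swap_apply_right]
      have : (x : ℕ) = m + 1 := by rw [hx2]
      simp only [this]
      split_ifs <;> omega
    · rw [Equiv.swap_apply_of_ne_of_ne hx1 hx2]
      have hv1 : (x : ℕ) ≠ m := fun h => hx1 (Fin.ext h)
      have hv2 : (x : ℕ) ≠ m + 1 := fun h => hx2 (Fin.ext h)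
      split_ifs <;> omega

end aux

lemma invNum_vswap {n m : ℕ} (hm : m + 1 < n) (π : Equiv.Perm (Fin n)) {p q : ℕ}
    (hp1 : 1 ≤ p) (hpq : p < q) (hqn : q ≤ n)
    (hv : (oneLine π p = m + 1 ∧ oneLine π q = m + 2) ∨
          (oneLine π p = m + 2 ∧ oneLine π q = m + 1)) :
    (-1 : Polynomial ℤ) ^ invNum (vswap n m hm π) = -(-1 : Polynomial ℤ) ^ invNum π := by
  classical
  set T : Finset (ℕ × ℕ) := (Finset.Icc 1 n) ×ˢ (Finset.Icc 1 n) with hT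
  set F : Equiv.Perm (Fin n) → ℕ × ℕ → Prop :=
    fun σ r => r.1 < r.2 ∧ oneLine σ r.2 < oneLine σ r.1 with hF
  have hset : T.filter (F (vswap n m hm π)) =
      if (p, q) ∈ T.filter (F π) then (T.filter (F π)).erase (p, q)
      else insert (p, q) (T.filter (F π)) := by
    have hpqT : (p, q) ∈ T := by
      simp only [hT, Finset.mem_product, Finset.mem_Icc]
      omega
    ext r
    obtain ⟨a, b⟩ := r
    by_cases hr : (a, b) = (p, q)
    · rw [Prod.mk.injEq] at hr
      obtain ⟨rfl, rfl⟩ := hr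
      rcases hv with ⟨h1, h2⟩ | ⟨h1, h2⟩
      · -- not an inversion before, inversion after
        have hFpi : ¬ F π (a, b) := by
          simp only [hF]
          rw [h1, h2]
          omega
        have hFtau : F (vswap n m hm π) (a, b) := by
          simp only [hF]
          refine ⟨hpq, ?_⟩
          rw [ol_vswap hm π (show 1 ≤ b by omega) hqn,
            ol_vswap hm π (show 1 ≤ a from hp1) (show a ≤ n by omega), h1, h2]
          split_ifs <;> omega
        rw [if_neg (by simp only [Finset.mem_filter]; tauto)]
        simp only [Finset.mem_filter, Finset.mem_insert, true_or, iff_true]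
        exact ⟨hpqT, hFtau⟩
      · -- inversion before, not after
        have hFpi : F π (a, b) := by
          simp only [hF]
          rw [h1, h2]
          omega
        have hFtau : ¬ F (vswap n m hm π) (a, b) := by
          simp only [hF]
          rw [ol_vswap hm π (show 1 ≤ b by omega) hqn,
            ol_vswap hm π (show 1 ≤ a from hp1) (show a ≤ n by omega), h1, h2]
          split_ifs <;> omega
        rw [if_pos (by simp only [Finset.mem_filter]; exact ⟨hpqT, hFpi⟩)]
        simp only [Finset.mem_filter, Finset.mem_erase, ne_eq, not_true_eq_false,
          false_and, iff_false]
        intro hc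
        exact hFtau hc.2
    · by_cases hmemT : (a, b) ∈ T
      · have haT : 1 ≤ a ∧ a ≤ n ∧ 1 ≤ b ∧ b ≤ n := by
          simp only [hT, Finset.mem_product, Finset.mem_Icc] at hmemT
          omega
        have hstat : F (vswap n m hm π) (a, b) ↔ F π (a, b) := by
          simp only [hF]
          by_cases hab : a < b
          · rw [ol_vswap hm π (show 1 ≤ b from haT.2.2.1) haT.2.2.2,
              ol_vswap hm π (show 1 ≤ a from haT.1) haT.2.1]
            have hne : oneLine π a ≠ oneLine π b := fun h =>
              (show a ≠ b by omega) (ol_inj π haT.1 haT.2.1 haT.2.2.1 haT.2.2.2 h)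
            have hboth : ¬ ((oneLine π a = m+1 ∨ oneLine π a = m+2) ∧
                (oneLine π b = m+1 ∨ oneLine π b = m+2)) := by
              rintro ⟨ha, hb⟩
              have hap : a = p ∨ a = q := by
                rcases hv with ⟨h1, h2⟩ | ⟨h1, h2⟩ <;> rcases ha with h | h
                · exact Or.inl (ol_inj π haT.1 haT.2.1 (by omega) (by omega) (h.trans h1.symm))
                · exact Or.inr (ol_inj π haT.1 haT.2.1 (by omega) hqn (h.trans h2.symm))
                · exact Or.inr (ol_inj π haT.1 haT.2.1 (by omega) hqn (h.trans h2.symm))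
                · exact Or.inl (ol_inj π haT.1 haT.2.1 (by omega) (by omega) (h.trans h1.symm))
              have hbp : b = p ∨ b = q := by
                rcases hv with ⟨h1, h2⟩ | ⟨h1, h2⟩ <;> rcases hb with h | h
                · exact Or.inl (ol_inj π haT.2.2.1 haT.2.2.2 (by omega) (by omega) (h.trans h1.symm))
                · exact Or.inr (ol_inj π haT.2.2.1 haT.2.2.2 (by omega) hqn (h.trans h2.symm))
                · exact Or.inr (ol_inj π haT.2.2.1 haT.2.2.2 (by omega) hqn (h.trans h2.symm))
                · exact Or.inl (ol_inj π haT.2.2.1 haT.2.2.2 (by omega) (by omega) (h.trans h1.symm))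
              apply hr
              have hcc : a = p ∧ b = q := by omega
              rw [hcc.1, hcc.2]
            constructor
            · rintro ⟨h1, h2⟩
              refine ⟨h1, ?_⟩
              revert h2
              split_ifs <;> omega
            · rintro ⟨h1, h2⟩
              refine ⟨h1, ?_⟩
              split_ifs <;> omega
          · constructor <;> rintro ⟨h1, h2⟩ <;> exact absurd h1 hab
        split_ifs with hmem
        · simp only [Finset.mem_erase, Finset.mem_filter, hmemT, true_and]
          constructor
          · intro h; exact ⟨hr, hstat.mp h⟩
          · intro h; exact hstat.mpr h.2
        · simp only [Finset.mem_insert, Finset.mem_filter, hmemT, true_and]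
          constructor
          · intro h; exact Or.inr (hstat.mp h)
          · rintro (h | h)
            · exact absurd h hr
            · exact hstat.mpr h
      · split_ifs with hmem
        · simp [Finset.mem_erase, Finset.mem_filter, hmemT]
        · simp [Finset.mem_insert, Finset.mem_filter, hmemT, hr]
  show (-1 : Polynomial ℤ) ^ (T.filter (F (vswap n m hm π))).card =
    -(-1 : Polynomial ℤ) ^ (T.filter (F π)).card
  rw [hset]
  split_ifs with hmem
  · have hpos : 1 ≤ (T.filter (F π)).card := Finset.card_pos.mpr ⟨_, hmem⟩
    rw [Finset.card_erase_of_mem hmem]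
    have h1 : (-1 : Polynomial ℤ) ^ (T.filter (F π)).card =
        (-1) ^ ((T.filter (F π)).card - 1) * (-1) := by
      rw [← pow_succ]
      congr 1
      omega
    rw [h1]
    ring
  · rw [Finset.card_insert_of_notMem hmem, pow_succ]
    ring

section stats
variable {n m : ℕ}

/-- D0: depth is preserved when both values m+1 and m+2 sit at positions ≥ m+2. -/
lemma depth_vswap0 (hm : m + 1 < n) (π : Equiv.Perm (Fin n))
    (hpos : ∀ t, 1 ≤ t → t ≤ n → (oneLine π t = m + 1 ∨ oneLine π t = m + 2) → m + 2 ≤ t) :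
    depthStat (vswap n m hm π) = depthStat π := by
  unfold depthStat
  rw [Finset.sum_filter, Finset.sum_filter]
  apply Finset.sum_congr rfl
  intro t ht
  simp only [Finset.mem_Icc] at ht
  rw [ol_vswap hm π ht.1 ht.2]
  have := hpos t ht.1 ht.2
  split_ifs <;> omega

/-- D1: depth drops by 1 when value m+2 is at position m+1 and value m+1 at position ≥ m+2. -/
lemma depth_vswap1 (hm : m + 1 < n) (π : Equiv.Perm (Fin n))
    (h2 : oneLine π (m + 1) = m + 2)
    (hpos : ∀ t, 1 ≤ t → t ≤ n → oneLine π t = m + 1 → m + 2 ≤ t) :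
    depthStat π = depthStat (vswap n m hm π) + 1 := by
  unfold depthStat
  rw [Finset.sum_filter, Finset.sum_filter]
  have key : ∀ t ∈ Finset.Icc 1 n,
      (if t < oneLine π t then oneLine π t - t else 0) =
      (if t < oneLine (vswap n m hm π) t then oneLine (vswap n m hm π) t - t else 0)
        + (if t = m + 1 then 1 else 0) := by
    intro t ht
    simp only [Finset.mem_Icc] at ht
    rw [ol_vswap hm π ht.1 ht.2]
    have hiff : oneLine π t = m + 2 ↔ t = m + 1 := by
      constructor
      · intro h
        exact ol_inj π ht.1 ht.2 (by omega) (by omega) (h.trans h2.symm)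
      · intro h
        rw [h]; exact h2
    have := hpos t ht.1 ht.2
    rcases hiff with ⟨hf, hb⟩
    split_ifs <;> omega
  rw [Finset.sum_congr rfl key, Finset.sum_add_distrib,
    Finset.sum_ite_eq' (Finset.Icc 1 n) (m+1) (fun _ => 1)]
  rw [if_pos (by simp only [Finset.mem_Icc]; omega)]

/-- arithmetic core for R0 -/
lemma drp_point0 (m a b A B : ℕ) (hne : a ≠ b)
    (hA : A = if a = m+1 then m+2 else if a = m+2 then m+1 else a)
    (hB : B = if b = m+1 then m+2 else if b = m+2 then m+1 else b)
    (F2 : (a = m+1 ∨ a = m+2) → m+1 ≤ b)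
    (F3 : (b = m+1 ∨ b = m+2) → m+1 ≤ a) :
    (if B < A then A - B else 0) + (if b = m+1 then 1 else 0)
      = (if b < a then a - b else 0) + (if b = m+2 then 1 else 0) := by
  subst hA hB
  split_ifs <;> omega

/-- arithmetic core for R1 -/
lemma drp_point1 (m a b A B : ℕ) (hne : a ≠ b)
    (hA : A = if a = m+1 then m+2 else if a = m+2 then m+1 else a)
    (hB : B = if b = m+1 then m+2 else if b = m+2 then m+1 else b)
    (F2 : a = m+1 → m+3 ≤ b)
    (F3 : a = m+2 → (b = m+1 ∨ m+3 ≤ b))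
    (F4 : b = m+1 → m+1 ≤ a)
    (F5 : b = m+2 → a < m+1) :
    (if b < a then a - b else 0)
      = (if B < A then A - B else 0) + (if b = m+1 then 1 else 0) := by
  subst hA hB
  split_ifs <;> omega

end stats

section drps
variable {n m : ℕ}

/-- indicator sum: exactly one t ∈ [1,n-1] has value x at position t+1, given pos ≥ 2 -/
lemma ind_sum (π : Equiv.Perm (Fin n)) {x i : ℕ} (hi2 : 2 ≤ i) (hin : i ≤ n)
    (hwi : oneLine π i = x) :
    (∑ t ∈ Finset.Icc 1 (n-1), if oneLine π (t+1) = x then 1 else 0) = 1 := by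
  have key : ∀ t ∈ Finset.Icc 1 (n-1),
      (if oneLine π (t+1) = x then (1:ℕ) else 0) = if t = i - 1 then 1 else 0 := by
    intro t ht
    simp only [Finset.mem_Icc] at ht
    by_cases h : oneLine π (t+1) = x
    · rw [if_pos h, if_pos]
      have := ol_inj π (show 1 ≤ t+1 by omega) (show t+1 ≤ n by omega)
        (show 1 ≤ i by omega) hin (h.trans hwi.symm)
      omega
    · rw [if_neg h, if_neg]
      intro hti
      apply h
      have : t + 1 = i := by omega
      rw [this, hwi]
  rw [Finset.sum_congr rfl key, Finset.sum_ite_eq' (Finset.Icc 1 (n-1)) (i-1) (fun _ => 1),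
    if_pos (by simp only [Finset.mem_Icc]; omega)]

/-- R0: drp preserved when values m+1,m+2 at positions ≥ m+2 and positions ≤ m fixed. -/
lemma drp_vswap0 (hm : m + 1 < n) (π : Equiv.Perm (Fin n))
    (hP : ∀ s, 1 ≤ s → s ≤ m → oneLine π s = s)
    (hpos : ∀ t, 1 ≤ t → t ≤ n → (oneLine π t = m + 1 ∨ oneLine π t = m + 2) → m + 2 ≤ t) :
    drpStat (vswap n m hm π) = drpStat π := by
  obtain ⟨i, hi1, hin, hwi⟩ := ol_surj π (show 1 ≤ m+1 by omega) (show m+1 ≤ n by omega)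
  obtain ⟨j, hj1, hjn, hwj⟩ := ol_surj π (show 1 ≤ m+2 by omega) (show m+2 ≤ n by omega)
  have hi2 : m + 2 ≤ i := hpos i hi1 hin (Or.inl hwi)
  have hj2 : m + 2 ≤ j := hpos j hj1 hjn (Or.inr hwj)
  unfold drpStat
  rw [Finset.sum_filter, Finset.sum_filter]
  have key : ∀ t ∈ Finset.Icc 1 (n-1),
      (if oneLine (vswap n m hm π) (t+1) < oneLine (vswap n m hm π) t then
          oneLine (vswap n m hm π) t - oneLine (vswap n m hm π) (t+1) else 0)
        + (if oneLine π (t+1) = m+1 then 1 else 0)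
      = (if oneLine π (t+1) < oneLine π t then oneLine π t - oneLine π (t+1) else 0)
        + (if oneLine π (t+1) = m+2 then 1 else 0) := by
    intro t ht
    simp only [Finset.mem_Icc] at ht
    have htn : t + 1 ≤ n := by omega
    rw [ol_vswap hm π (show 1 ≤ t by omega) (show t ≤ n by omega),
      ol_vswap hm π (show 1 ≤ t+1 by omega) htn]
    apply drp_point0 m (oneLine π t) (oneLine π (t+1)) _ _ ?_ rfl rfl ?_ ?_
    · intro h
      exact (show t ≠ t + 1 by omega)
        (ol_inj π (by omega) (by omega) (by omega) htn h)
    · intro h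
      have : m + 2 ≤ t := hpos t (by omega) (by omega) h
      exact ol_big π hP (by omega) htn
    · intro h
      have : m + 2 ≤ t + 1 := hpos (t+1) (by omega) htn h
      exact ol_big π hP (by omega) (by omega)
  have := Finset.sum_congr rfl key
  rw [Finset.sum_add_distrib, Finset.sum_add_distrib,
    ind_sum π (show 2 ≤ i by omega) hin hwi,
    ind_sum π (show 2 ≤ j by omega) hjn hwj] at this
  omega

/-- R1: drp drops by 1: value m+2 at position m+1, value m+1 at position ≥ m+2,
positions ≤ m fixed. -/
lemma drp_vswap1 (hm : m + 1 < n) (π : Equiv.Perm (Fin n))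
    (hP : ∀ s, 1 ≤ s → s ≤ m → oneLine π s = s)
    (h2 : oneLine π (m + 1) = m + 2)
    (hpos : ∀ t, 1 ≤ t → t ≤ n → oneLine π t = m + 1 → m + 2 ≤ t) :
    drpStat π = drpStat (vswap n m hm π) + 1 := by
  obtain ⟨i, hi1, hin, hwi⟩ := ol_surj π (show 1 ≤ m+1 by omega) (show m+1 ≤ n by omega)
  have hi2 : m + 2 ≤ i := hpos i hi1 hin hwi
  unfold drpStat
  rw [Finset.sum_filter, Finset.sum_filter]
  have key : ∀ t ∈ Finset.Icc 1 (n-1),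
      (if oneLine π (t+1) < oneLine π t then oneLine π t - oneLine π (t+1) else 0)
      = (if oneLine (vswap n m hm π) (t+1) < oneLine (vswap n m hm π) t then
          oneLine (vswap n m hm π) t - oneLine (vswap n m hm π) (t+1) else 0)
        + (if oneLine π (t+1) = m+1 then 1 else 0) := by
    intro t ht
    simp only [Finset.mem_Icc] at ht
    have htn : t + 1 ≤ n := by omega
    rw [ol_vswap hm π (show 1 ≤ t by omega) (show t ≤ n by omega),
      ol_vswap hm π (show 1 ≤ t+1 by omega) htn]
    have hne : oneLine π t ≠ oneLine π (t+1) := fun h =>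
      (show t ≠ t + 1 by omega) (ol_inj π (by omega) (by omega) (by omega) htn h)
    apply drp_point1 m (oneLine π t) (oneLine π (t+1)) _ _ hne rfl rfl ?_ ?_ ?_ ?_
    · -- a = m+1 → m+3 ≤ b
      intro h
      have hti : m + 2 ≤ t := hpos t (by omega) (by omega) h
      have hb1 : m + 1 ≤ oneLine π (t+1) := ol_big π hP (by omega) htn
      have hbne1 : oneLine π (t+1) ≠ m + 1 := fun hc => hne (h.trans hc.symm)
      have hbne2 : oneLine π (t+1) ≠ m + 2 := by
        intro hc
        have := ol_inj π (show 1 ≤ t+1 by omega) htn (show 1 ≤ m+1 by omega)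
          (show m+1 ≤ n by omega) (hc.trans h2.symm)
        omega
      omega
    · -- a = m+2 → b = m+1 ∨ m+3 ≤ b
      intro h
      have hti : t = m + 1 := ol_inj π (by omega) (by omega) (by omega)
        (show m+1 ≤ n by omega) (h.trans h2.symm)
      have hb1 : m + 1 ≤ oneLine π (t+1) := ol_big π hP (by omega) htn
      have hbne2 : oneLine π (t+1) ≠ m + 2 := fun hc => hne (h.trans hc.symm)
      omega
    · -- b = m+1 → m+1 ≤ a
      intro h
      have : m + 2 ≤ t + 1 := hpos (t+1) (by omega) htn h
      exact ol_big π hP (by omega) (by omega)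
    · -- b = m+2 → a < m+1
      intro h
      have hti : t + 1 = m + 1 := ol_inj π (by omega) htn (by omega)
        (show m+1 ≤ n by omega) (h.trans h2.symm)
      have : oneLine π t = t := hP t (by omega) (by omega)
      omega
  rw [Finset.sum_congr rfl key, Finset.sum_add_distrib,
    ind_sum π (show 2 ≤ i by omega) hin hwi]

end drps


section sums
variable {n m : ℕ}

/-- The set of permutations fixing positions 1..m. -/
def fixSet (n m : ℕ) : Finset (Equiv.Perm (Fin n)) :=
  @Finset.filter _ (fun π => ∀ s ∈ Finset.Icc 1 m, oneLine π s = s)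
    (fun _ => Finset.decidableDforallFinset) Finset.univ

lemma mem_fixSet {π : Equiv.Perm (Fin n)} :
    π ∈ fixSet n m ↔ ∀ s ∈ Finset.Icc 1 m, oneLine π s = s := by
  simp [fixSet]

/-- the vswap preserves small fixed points -/
lemma vswap_fix (hm : m + 1 < n) (π : Equiv.Perm (Fin n))
    (hP : ∀ s ∈ Finset.Icc 1 m, oneLine π s = s) :
    ∀ s ∈ Finset.Icc 1 m, oneLine (vswap n m hm π) s = s := by
  intro s hs
  simp only [Finset.mem_Icc] at hs
  rw [ol_vswap hm π hs.1 (by omega)]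
  have := hP s (by simp only [Finset.mem_Icc]; omega)
  split_ifs <;> omega

/-- positions of values m+1, m+2 are ≥ m+2 when small positions are fixed and
position m+1 does not hold m+1 or m+2 -/
lemma pos_ge (π : Equiv.Perm (Fin n)) (hmn : m + 1 ≤ n)
    (hP : ∀ s ∈ Finset.Icc 1 m, oneLine π s = s)
    (hQ1 : oneLine π (m+1) ≠ m + 1) (hQ2 : oneLine π (m+1) ≠ m + 2) :
    ∀ t, 1 ≤ t → t ≤ n → (oneLine π t = m + 1 ∨ oneLine π t = m + 2) → m + 2 ≤ t := by
  intro t h1 h2 hv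
  have hP' : ∀ s, 1 ≤ s → s ≤ m → oneLine π s = s := fun s hs1 hs2 =>
    hP s (by simp only [Finset.mem_Icc]; omega)
  by_cases htm : t ≤ m
  · have := hP' t h1 htm
    omega
  · rcases Nat.lt_or_ge t (m+2) with hlt | hge
    · have : t = m + 1 := by omega
      rw [this] at hv
      rcases hv with h | h
      · exact absurd h hQ1
      · exact absurd h hQ2
    · exact hge

/-- L0: generic vanishing lemma -/
lemma sum_zero (hm : m + 1 < n) (Q : ℕ → Prop) [DecidablePred Q]
    (hQ1 : ¬ Q (m+1)) (hQ2 : ¬ Q (m+2)) (stat : Equiv.Perm (Fin n) → ℕ)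
    (hstat : ∀ π : Equiv.Perm (Fin n),
      (∀ s, 1 ≤ s → s ≤ m → oneLine π s = s) →
      (∀ t, 1 ≤ t → t ≤ n → (oneLine π t = m + 1 ∨ oneLine π t = m + 2) → m + 2 ≤ t) →
      stat (vswap n m hm π) = stat π) :
    (∑ π ∈ (fixSet n m).filter (fun π => Q (oneLine π (m+1))),
      (-1 : Polynomial ℤ) ^ invNum π * Polynomial.X ^ stat π) = 0 := by
  apply Finset.sum_involution (fun π _ => vswap n m hm π)
  · -- f a + f (g a) = 0
    intro π hπ
    simp only [Finset.mem_filter, mem_fixSet] at hπ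
    obtain ⟨hP, hQ⟩ := hπ
    have hQ1' : oneLine π (m+1) ≠ m+1 := fun h => hQ1 (h ▸ hQ)
    have hQ2' : oneLine π (m+1) ≠ m+2 := fun h => hQ2 (h ▸ hQ)
    have hpos := pos_ge π (by omega) hP hQ1' hQ2'
    have hP' : ∀ s, 1 ≤ s → s ≤ m → oneLine π s = s := fun s hs1 hs2 =>
      hP s (by simp only [Finset.mem_Icc]; omega)
    obtain ⟨i, hi1, hin, hwi⟩ := ol_surj π (show 1 ≤ m+1 by omega) (show m+1 ≤ n by omega)
    obtain ⟨j, hj1, hjn, hwj⟩ := ol_surj π (show 1 ≤ m+2 by omega) (show m+2 ≤ n by omega)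
    have hij : i ≠ j := fun h => by
      rw [h, hwj] at hwi
      omega
    have hsign : (-1 : Polynomial ℤ) ^ invNum (vswap n m hm π) = -(-1) ^ invNum π := by
      rcases Nat.lt_or_ge i j with hlt | hge
      · exact invNum_vswap hm π hi1 hlt hjn (Or.inl ⟨hwi, hwj⟩)
      · exact invNum_vswap hm π hj1 (by omega) hin (Or.inr ⟨hwj, hwi⟩)
    rw [hstat π hP' hpos, hsign]
    ring
  · -- g a ≠ a
    intro π hπ _
    obtain ⟨i, hi1, hin, hwi⟩ := ol_surj π (show 1 ≤ m+1 by omega) (show m+1 ≤ n by omega)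
    intro hc
    have := congrArg (fun σ => oneLine σ i) hc
    rw [ol_vswap hm π hi1 hin, hwi, if_pos rfl] at this
    omega
  · -- g a ∈ s
    intro π hπ
    simp only [Finset.mem_filter, mem_fixSet] at hπ ⊢
    obtain ⟨hP, hQ⟩ := hπ
    refine ⟨vswap_fix hm π hP, ?_⟩
    rw [ol_vswap hm π (by omega) (by omega)]
    have hQ1' : oneLine π (m+1) ≠ m+1 := fun h => hQ1 (h ▸ hQ)
    have hQ2' : oneLine π (m+1) ≠ m+2 := fun h => hQ2 (h ▸ hQ)
    rw [if_neg hQ1', if_neg hQ2']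
    exact hQ
  · -- involution
    intro π hπ
    exact vswap_vswap hm π

/-- L1: generic shift lemma -/
lemma sum_shift (hm : m + 1 < n) (stat : Equiv.Perm (Fin n) → ℕ)
    (hstat : ∀ σ : Equiv.Perm (Fin n),
      (∀ s, 1 ≤ s → s ≤ m → oneLine σ s = s) → oneLine σ (m+1) = m+1 →
      stat (vswap n m hm σ) = stat σ + 1) :
    (∑ π ∈ (fixSet n m).filter (fun π => oneLine π (m+1) = m+2),
      (-1 : Polynomial ℤ) ^ invNum π * Polynomial.X ^ stat π)
    = -Polynomial.X * ∑ π ∈ (fixSet n m).filter (fun π => oneLine π (m+1) = m+1),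
      (-1 : Polynomial ℤ) ^ invNum π * Polynomial.X ^ stat π := by
  rw [Finset.mul_sum]
  apply Finset.sum_bij' (fun π _ => vswap n m hm π) (fun σ _ => vswap n m hm σ)
  · -- maps into A₁
    intro π hπ
    simp only [Finset.mem_filter, mem_fixSet] at hπ ⊢
    obtain ⟨hP, h2⟩ := hπ
    refine ⟨vswap_fix hm π hP, ?_⟩
    rw [ol_vswap hm π (by omega) (by omega), h2, if_neg (by omega), if_pos rfl]
  · -- maps back into A₂
    intro σ hσ
    simp only [Finset.mem_filter, mem_fixSet] at hσ ⊢
    obtain ⟨hP, h1⟩ := hσ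
    refine ⟨vswap_fix hm σ hP, ?_⟩
    rw [ol_vswap hm σ (by omega) (by omega), h1, if_pos rfl]
  · intro π hπ
    exact vswap_vswap hm π
  · intro σ hσ
    exact vswap_vswap hm σ
  · -- f a = g (i a)
    intro π hπ
    simp only [Finset.mem_filter, mem_fixSet] at hπ
    obtain ⟨hP, h2⟩ := hπ
    have hP' : ∀ s, 1 ≤ s → s ≤ m → oneLine π s = s := fun s hs1 hs2 =>
      hP s (by simp only [Finset.mem_Icc]; omega)
    set σ := vswap n m hm π with hσdef
    have hPσ : ∀ s, 1 ≤ s → s ≤ m → oneLine σ s = s := fun s hs1 hs2 =>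
      vswap_fix hm π hP s (by simp only [Finset.mem_Icc]; omega)
    have h1σ : oneLine σ (m+1) = m+1 := by
      rw [hσdef, ol_vswap hm π (by omega) (by omega), h2, if_neg (by omega), if_pos rfl]
    have hππ : vswap n m hm σ = π := vswap_vswap hm π
    have hstatπ : stat π = stat σ + 1 := by
      have := hstat σ hPσ h1σ
      rw [hππ] at this
      exact this
    obtain ⟨i, hi1, hin, hwi⟩ := ol_surj π (show 1 ≤ m+1 by omega) (show m+1 ≤ n by omega)
    have hi2 : m + 2 ≤ i := by
      by_cases htm : i ≤ m
      · have := hP' i hi1 htm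
        omega
      · rcases Nat.lt_or_ge i (m+2) with hlt | hge
        · have : i = m + 1 := by omega
          rw [this, h2] at hwi
          omega
        · exact hge
    have hsign : (-1 : Polynomial ℤ) ^ invNum σ = -(-1) ^ invNum π :=
      invNum_vswap hm π (show 1 ≤ m+1 by omega) (show m+1 < i by omega) hin
        (Or.inr ⟨h2, hwi⟩)
    have hsign' : (-1 : Polynomial ℤ) ^ invNum π = -(-1) ^ invNum σ := by
      rw [hsign]; ring
    rw [hstatπ, hsign', pow_succ]
    ring

end sums

section main
variable {n m : ℕ}

lemma depth_shift (hm : m + 1 < n) (σ : Equiv.Perm (Fin n))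
    (hP : ∀ s, 1 ≤ s → s ≤ m → oneLine σ s = s) (h1 : oneLine σ (m+1) = m+1) :
    depthStat (vswap n m hm σ) = depthStat σ + 1 := by
  have h2 : oneLine (vswap n m hm σ) (m+1) = m+2 := by
    rw [ol_vswap hm σ (by omega) (by omega), h1, if_pos rfl]
  have hpos : ∀ t, 1 ≤ t → t ≤ n → oneLine (vswap n m hm σ) t = m+1 → m+2 ≤ t := by
    intro t ht1 ht2 hv
    rw [ol_vswap hm σ ht1 ht2] at hv
    by_cases htm : t ≤ m
    · have := hP t ht1 htm
      revert hv
      split_ifs <;> omega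
    · rcases Nat.lt_or_ge t (m+2) with hlt | hge
      · have heq : t = m + 1 := by omega
        rw [heq, h1] at hv
        revert hv
        split_ifs <;> omega
      · exact hge
  have := depth_vswap1 hm (vswap n m hm σ) h2 hpos
  rwa [vswap_vswap hm σ] at this

lemma drp_shift (hm : m + 1 < n) (σ : Equiv.Perm (Fin n))
    (hP : ∀ s, 1 ≤ s → s ≤ m → oneLine σ s = s) (h1 : oneLine σ (m+1) = m+1) :
    drpStat (vswap n m hm σ) = drpStat σ + 1 := by
  have h2 : oneLine (vswap n m hm σ) (m+1) = m+2 := by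
    rw [ol_vswap hm σ (by omega) (by omega), h1, if_pos rfl]
  have hPτ : ∀ s, 1 ≤ s → s ≤ m → oneLine (vswap n m hm σ) s = s := by
    intro s hs1 hs2
    rw [ol_vswap hm σ hs1 (by omega)]
    have := hP s hs1 hs2
    split_ifs <;> omega
  have hpos : ∀ t, 1 ≤ t → t ≤ n → oneLine (vswap n m hm σ) t = m+1 → m+2 ≤ t := by
    intro t ht1 ht2 hv
    rw [ol_vswap hm σ ht1 ht2] at hv
    by_cases htm : t ≤ m
    · have := hP t ht1 htm
      revert hv
      split_ifs <;> omega
    · rcases Nat.lt_or_ge t (m+2) with hlt | hge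
      · have heq : t = m + 1 := by omega
        rw [heq, h1] at hv
        revert hv
        split_ifs <;> omega
      · exact hge
  have := drp_vswap1 hm (vswap n m hm σ) hPτ h2 hpos
  rwa [vswap_vswap hm σ] at this

/-- the set of permutations fixing 1..m is {1} when n ≤ m+1 -/
lemma fixSet_singleton (hnm : n ≤ m + 1) : fixSet n m = {1} := by
  ext π
  rw [mem_fixSet]
  simp only [Finset.mem_singleton]
  constructor
  · intro hP
    have hfix : ∀ y : Fin n, (y : ℕ) + 1 ≤ m → π y = y := by
      intro y hy
      have h := hP ((y : ℕ) + 1) (by simp only [Finset.mem_Icc]; omega)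
      have hlt : (y : ℕ) + 1 - 1 < n := by simpa using y.isLt
      simp only [oneLine, dif_pos hlt] at h
      have heq : (⟨(y : ℕ) + 1 - 1, hlt⟩ : Fin n) = y := Fin.ext (by simp)
      rw [heq] at h
      exact Fin.ext (by omega)
    apply Equiv.ext
    intro x
    simp only [Equiv.Perm.one_apply]
    by_cases hx : (x : ℕ) + 1 ≤ m
    · exact hfix x hx
    · have hxm : (x : ℕ) = m ∧ n = m + 1 := by
        have := x.isLt
        omega
      by_contra hne
      set z := π x with hz
      have hzx : z ≠ x := hne
      have hzm : (z : ℕ) + 1 ≤ m := by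
        have h1 := z.isLt
        have h2 : (z : ℕ) ≠ (x : ℕ) := fun h => hzx (Fin.ext h)
        omega
      have hfz : π z = z := hfix z hzm
      have : π z = π x := by rw [hfz, hz]
      exact hzx (π.injective this)
  · intro h
    subst h
    intro s hs
    simp only [Finset.mem_Icc] at hs
    exact ol_one hs.1

lemma depth_one : depthStat (1 : Equiv.Perm (Fin n)) = 0 := by
  unfold depthStat
  rw [Finset.filter_false_of_mem, Finset.sum_empty]
  intro i hi
  simp only [Finset.mem_Icc] at hi
  rw [ol_one hi.1]
  omega

lemma drp_one : drpStat (1 : Equiv.Perm (Fin n)) = 0 := by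
  unfold drpStat
  rw [Finset.filter_false_of_mem, Finset.sum_empty]
  intro i hi
  simp only [Finset.mem_Icc] at hi
  rw [ol_one hi.1, ol_one (by omega : (1:ℕ) ≤ i + 1)]
  omega

/-- the main induction -/
lemma main_ind (n : ℕ) : ∀ d m : ℕ, n ≤ m + d + 1 →
    (∑ π ∈ fixSet n m, (-1 : Polynomial ℤ) ^ invNum π * Polynomial.X ^ depthStat π)
    = ∑ π ∈ fixSet n m, (-1 : Polynomial ℤ) ^ invNum π * Polynomial.X ^ drpStat π := by
  intro d
  induction d with
  | zero =>
    intro m hnm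
    rw [fixSet_singleton (by omega), Finset.sum_singleton, Finset.sum_singleton,
      depth_one, drp_one]
  | succ d ih =>
    intro m hnm
    by_cases hm : m + 1 < n
    · -- split the sum into three parts according to oneLine π (m+1)
      have split : ∀ stat : Equiv.Perm (Fin n) → ℕ,
          (∑ π ∈ fixSet n m, (-1 : Polynomial ℤ) ^ invNum π * Polynomial.X ^ stat π)
          = (∑ π ∈ (fixSet n m).filter (fun π => oneLine π (m+1) = m+1),
              (-1 : Polynomial ℤ) ^ invNum π * Polynomial.X ^ stat π)
          + ((∑ π ∈ (fixSet n m).filter (fun π => oneLine π (m+1) = m+2),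
              (-1 : Polynomial ℤ) ^ invNum π * Polynomial.X ^ stat π)
          + (∑ π ∈ (fixSet n m).filter
                (fun π => ¬ (oneLine π (m+1) = m+1) ∧ ¬ (oneLine π (m+1) = m+2)),
              (-1 : Polynomial ℤ) ^ invNum π * Polynomial.X ^ stat π)) := by
        intro stat
        rw [← Finset.sum_filter_add_sum_filter_not (fixSet n m)
          (fun π => oneLine π (m+1) = m+1)]
        congr 1
        rw [← Finset.sum_filter_add_sum_filter_not
          ((fixSet n m).filter (fun π => ¬ oneLine π (m+1) = m+1))
          (fun π => oneLine π (m+1) = m+2), Finset.filter_filter, Finset.filter_filter]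
        congr 2
        · apply Finset.filter_congr
          intro π _
          constructor
          · rintro ⟨h1, h2⟩
            exact h2
          · intro h2
            exact ⟨by omega, h2⟩
      rw [split depthStat, split drpStat]
      -- third pieces vanish
      rw [sum_zero hm (fun x => ¬ (x = m+1) ∧ ¬ (x = m+2)) (by simp) (by simp) depthStat
        (fun π hP hpos => depth_vswap0 hm π hpos),
        sum_zero hm (fun x => ¬ (x = m+1) ∧ ¬ (x = m+2)) (by simp) (by simp) drpStat
        (fun π hP hpos => drp_vswap0 hm π hP hpos)]
      -- second pieces shift
      rw [sum_shift hm depthStat (depth_shift hm), sum_shift hm drpStat (drp_shift hm)]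
      -- first pieces: reduce to m+1 and use ih
      have hconv : (fixSet n m).filter (fun π => oneLine π (m+1) = m+1) = fixSet n (m+1) := by
        ext π
        rw [Finset.mem_filter, mem_fixSet, mem_fixSet]
        constructor
        · rintro ⟨hP, h1⟩ s hs
          simp only [Finset.mem_Icc] at hs
          rcases Nat.lt_or_ge s (m+1) with h | h
          · exact hP s (by simp only [Finset.mem_Icc]; omega)
          · have hsm : s = m + 1 := by omega
            rw [hsm]; exact h1
        · intro h
          refine ⟨fun s hs => ?_, h (m+1) (by simp only [Finset.mem_Icc]; omega)⟩
          simp only [Finset.mem_Icc] at hs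
          exact h s (by simp only [Finset.mem_Icc]; omega)
      rw [hconv, ih (m+1) (by omega)]
    · rw [fixSet_singleton (by omega), Finset.sum_singleton, Finset.sum_singleton,
        depth_one, drp_one]

end main


/-- for each k ∈ {1,…,n}, the signed distributions of depth and drp
agree on permutations with first letter k. -/
theorem stmt19 (n : ℕ) (hn : 0 < n) (k : ℕ) (hk : k ∈ Finset.Icc 1 n) :
    (∑ π ∈ Finset.univ.filter (fun π : Equiv.Perm (Fin n) => oneLine π 1 = k),
        (-1 : Polynomial ℤ) ^ invNum π * Polynomial.X ^ depthStat π) =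
      ∑ π ∈ Finset.univ.filter (fun π : Equiv.Perm (Fin n) => oneLine π 1 = k),
        (-1 : Polynomial ℤ) ^ invNum π * Polynomial.X ^ drpStat π := by
  simp only [Finset.mem_Icc] at hk
  rcases Nat.lt_or_ge k 3 with hk3 | hk3
  · rcases (by omega : k = 1 ∨ k = 2) with rfl | rfl
    · -- k = 1
      have hfil : Finset.univ.filter (fun π : Equiv.Perm (Fin n) => oneLine π 1 = 1)
          = fixSet n 1 := by
        ext π
        rw [Finset.mem_filter, mem_fixSet]
        simp only [Finset.mem_univ, true_and, Finset.Icc_self, Finset.mem_singleton]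
        constructor
        · intro h s hs
          rw [hs]
          exact h
        · intro h
          exact h 1 rfl
      rw [hfil]
      exact main_ind n n 1 (by omega)
    · -- k = 2
      have h01 : (0:ℕ) + 1 < n := by omega
      have hfilA : Finset.univ.filter (fun π : Equiv.Perm (Fin n) => oneLine π 1 = 2)
          = (fixSet n 0).filter (fun π => oneLine π (0+1) = 0+2) := by
        ext π
        rw [Finset.mem_filter, Finset.mem_filter, mem_fixSet]
        simp only [Finset.mem_univ, true_and]
        have hempty : Finset.Icc 1 0 = (∅ : Finset ℕ) := by
          apply Finset.Icc_eq_empty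
          omega
        rw [hempty]
        simp
      have hfil1 : (fixSet n 0).filter (fun π => oneLine π (0+1) = 0+1) = fixSet n 1 := by
        ext π
        rw [Finset.mem_filter, mem_fixSet, mem_fixSet]
        have hempty : Finset.Icc 1 0 = (∅ : Finset ℕ) := by
          apply Finset.Icc_eq_empty
          omega
        rw [hempty]
        simp only [Finset.notMem_empty, false_implies, implies_true, true_and,
          Finset.Icc_self, Finset.mem_singleton]
        constructor
        · intro h s hs
          rw [hs]
          exact h
        · intro h
          exact h 1 rfl
      rw [hfilA, sum_shift h01 depthStat (depth_shift h01),
        sum_shift h01 drpStat (drp_shift h01), hfil1, main_ind n n 1 (by omega)]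
  · -- 3 ≤ k
    have h01 : (0:ℕ) + 1 < n := by omega
    have hfil : Finset.univ.filter (fun π : Equiv.Perm (Fin n) => oneLine π 1 = k)
        = (fixSet n 0).filter (fun π => oneLine π (0+1) = k) := by
      ext π
      rw [Finset.mem_filter, Finset.mem_filter, mem_fixSet]
      simp only [Finset.mem_univ, true_and]
      have hempty : Finset.Icc 1 0 = (∅ : Finset ℕ) := by
        apply Finset.Icc_eq_empty
        omega
      rw [hempty]
      simp
    rw [hfil,
      sum_zero h01 (fun x => x = k) (by omega) (by omega) depthStat
        (fun π hP hpos => depth_vswap0 h01 π hpos),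
      sum_zero h01 (fun x => x = k) (by omega) (by omega) drpStat
        (fun π hP hpos => drp_vswap0 h01 π hP hpos)]
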